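/- arXiv:1002.2209 — 3 statements merged into one kernel-verified Lean document; each statement's English description precedes it below -/
import Mathlib

section
/- Let p be a prime, let δ > 0 and T > 0 be constants, let f : 𝔽_p^n → ℂ, and suppose that ‖f‖_{U^2}^* ≤ T. Then there is a linear subspace V of 𝔽_p^n of codimension at most δ^{−4}T^4 such that ‖f − f*μ_V‖_2 ≤ δ. -/
open scoped BigOperators

instance instNeZeroOfFactPrime (p : ℕ) [hp : Fact p.Prime] : NeZero p :=
  ⟨hp.out.ne_zero⟩

/-- The vector space `𝔽_p^n`. -/
abbrev Vec (p n : ℕ) := Fin n → ZMod p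

/-- `ω^t` where `ω = e^{2πi/p}`. -/
noncomputable def omg (p : ℕ) (t : ZMod p) : ℂ :=
  Complex.exp (2 * Real.pi * Complex.I * (t.val : ℂ) / p)

/-- Average of a complex-valued function over a finite type. -/
noncomputable def avgC {α : Type*} [Fintype α] (f : α → ℂ) : ℂ :=
  (∑ x, f x) / (Fintype.card α : ℂ)

/-- Average of a real-valued function over a finite type. -/
noncomputable def avgR {α : Type*} [Fintype α] (f : α → ℝ) : ℝ :=
  (∑ x, f x) / (Fintype.card α : ℝ)

/-- The Gowers `U²` norm. -/
noncomputable def U2 {p n : ℕ} [NeZero p] (f : Vec p n → ℂ) : ℝ :=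
  ‖avgC (fun t : Vec p n × Vec p n × Vec p n =>
    f t.1 * star (f (t.1 + t.2.1)) * star (f (t.1 + t.2.2)) *
      f (t.1 + t.2.1 + t.2.2))‖ ^ ((1 : ℝ) / 4)

/-- The Gowers `U³` norm. -/
noncomputable def U3 {p n : ℕ} [NeZero p] (f : Vec p n → ℂ) : ℝ :=
  ‖avgC (fun t : Vec p n × Vec p n × Vec p n × Vec p n =>
    f t.1 * star (f (t.1 + t.2.1)) * star (f (t.1 + t.2.2.1)) *
      f (t.1 + t.2.1 + t.2.2.1) * star (f (t.1 + t.2.2.2)) *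
      f (t.1 + t.2.1 + t.2.2.2) * f (t.1 + t.2.2.1 + t.2.2.2) *
      star (f (t.1 + t.2.1 + t.2.2.1 + t.2.2.2)))‖ ^ ((1 : ℝ) / 8)

/-- `L¹` norm (with respect to the uniform probability measure). -/
noncomputable def L1 {p n : ℕ} [NeZero p] (f : Vec p n → ℂ) : ℝ :=
  avgR (fun x => ‖f x‖)

/-- `L²` norm (with respect to the uniform probability measure). -/
noncomputable def L2 {p n : ℕ} [NeZero p] (f : Vec p n → ℂ) : ℝ :=
  Real.sqrt (avgR (fun x => ‖f x‖ ^ 2))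

/-- `L∞` norm. -/
noncomputable def Linf {p n : ℕ} [NeZero p] (f : Vec p n → ℂ) : ℝ :=
  ⨆ x, ‖f x‖

/-- Normalized inner product `⟨f,g⟩ = 𝔼_x f(x) conj (g x)`. -/
noncomputable def inprod {p n : ℕ} [NeZero p] (f g : Vec p n → ℂ) : ℂ :=
  avgC (fun x => f x * star (g x))

/-- The dual of the `U²` norm. -/
noncomputable def U2dual {p n : ℕ} [NeZero p] (g : Vec p n → ℂ) : ℝ :=
  sSup {r : ℝ | ∃ f : Vec p n → ℂ, U2 f ≤ 1 ∧ r = ‖inprod f g‖}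

/-- The elements of a submodule of `𝔽_p^n` as a `Finset`. -/
noncomputable def subFinset {p n : ℕ} [NeZero p] (V : Submodule (ZMod p) (Vec p n)) :
    Finset (Vec p n) :=
  letI := Classical.decPred (fun v => v ∈ (V : Set (Vec p n)))
  Finset.univ.filter (fun v => v ∈ (V : Set (Vec p n)))

/-- Convolution `f * μ_V`, i.e. the average of `f` over the coset `x + V`. -/
noncomputable def convMu {p n : ℕ} [NeZero p] (f : Vec p n → ℂ)
    (V : Submodule (ZMod p) (Vec p n)) (x : Vec p n) : ℂ :=
  (∑ v ∈ subFinset V, f (x + v)) / ((subFinset V).card : ℂ)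

/-- The associated symmetric form `β(u,v) = q(u+v) - q(u) - q(v)`. -/
def qbeta {p n : ℕ} (q : Vec p n → ZMod p) (u v : Vec p n) : ZMod p :=
  q (u + v) - q u - q v

/-- `q` is a quadratic form on the subspace `V`: `q 0 = 0` and the associated
form `β` is (bi-)additive on `V`. -/
def IsQuadFormOn {p n : ℕ} (V : Submodule (ZMod p) (Vec p n))
    (q : Vec p n → ZMod p) : Prop :=
  q 0 = 0 ∧ ∀ u ∈ V, ∀ v ∈ V, ∀ w ∈ V, qbeta q u (v + w) = qbeta q u v + qbeta q u w

/-- The radical `{v ∈ V : β(u,v) = 0 for all u ∈ V}` of the form associated to `q`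
(as the span of that set, which equals the set itself when `q` is quadratic). -/
noncomputable def qRadical {p n : ℕ} (V : Submodule (ZMod p) (Vec p n))
    (q : Vec p n → ZMod p) : Submodule (ZMod p) (Vec p n) :=
  Submodule.span (ZMod p) {v | v ∈ V ∧ ∀ u ∈ V, qbeta q u v = 0}

/-- The rank of the quadratic form `q` on `V`: the codimension in `V` of the radical. -/
noncomputable def qRank {p n : ℕ} (V : Submodule (ZMod p) (Vec p n))
    (q : Vec p n → ZMod p) : ℕ :=
  Module.finrank (ZMod p) V - Module.finrank (ZMod p) (qRadical V q)

/-- `Q` is a quadratic average with base `(V, q)`: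
`Q(x) = 𝔼_{y ∈ x+V} ω^{q(x-y) + φ_y(x-y)}` with each `φ_y` linear on `V`.
(Parametrizing `y = x - v` with `v ∈ V`, this reads `Q(x) = 𝔼_{v ∈ V} ω^{q(v) + φ_{x-v}(v)}`.) -/
def IsQuadAvgWith {p n : ℕ} [NeZero p] (V : Submodule (ZMod p) (Vec p n))
    (q : Vec p n → ZMod p) (Q : Vec p n → ℂ) : Prop :=
  IsQuadFormOn V q ∧
  ∃ φ : Vec p n → Vec p n → ZMod p,
    (∀ y, ∀ u ∈ V, ∀ v ∈ V, φ y (u + v) = φ y u + φ y v) ∧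
    ∀ x, Q x = (∑ v ∈ subFinset V, omg p (q v + φ (x - v) v)) / ((subFinset V).card : ℂ)

/-- The radical of a bilinear form `β` restricted to the subspace `W`. -/
noncomputable def bRadical {p n : ℕ} (W : Submodule (ZMod p) (Vec p n))
    (β : Vec p n →ₗ[ZMod p] Vec p n →ₗ[ZMod p] ZMod p) :
    Submodule (ZMod p) (Vec p n) :=
  Submodule.span (ZMod p) {y | y ∈ W ∧ ∀ x ∈ W, β x y = 0}

/-- The rank of the bilinear form `β` restricted to the subspace `W`. -/
noncomputable def bRankOn {p n : ℕ} (W : Submodule (ZMod p) (Vec p n))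
    (β : Vec p n →ₗ[ZMod p] Vec p n →ₗ[ZMod p] ZMod p) : ℕ :=
  Module.finrank (ZMod p) W - Module.finrank (ZMod p) (bRadical W β)

namespace St13
variable {p n : ℕ} [hp : Fact p.Prime]
set_option linter.unusedSectionVars false

noncomputable def w (p : ℕ) : ℂ := Complex.exp (2 * Real.pi * Complex.I / p)

lemma prim : IsPrimitiveRoot (w p) p :=
  Complex.isPrimitiveRoot_exp p (Fact.out (p := p.Prime)).ne_zero

lemma omg_eq_pow (t : ZMod p) : omg p t = w p ^ t.val := by
  rw [w, ← Complex.exp_nat_mul, omg]; ring_nf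

lemma w_pow_mod (k : ℕ) : w p ^ (k % p) = w p ^ k := by
  conv_rhs => rw [← Nat.div_add_mod k p]
  rw [pow_add, pow_mul, (prim (p := p)).pow_eq_one, one_pow, one_mul]

lemma omg_add (s t : ZMod p) : omg p (s + t) = omg p s * omg p t := by
  rw [omg_eq_pow, omg_eq_pow, omg_eq_pow, ZMod.val_add, w_pow_mod, pow_add]

lemma omg_zero : omg p 0 = 1 := by
  rw [omg_eq_pow, ZMod.val_zero, pow_zero]

lemma omg_eq_real (t : ZMod p) :
    omg p t = Complex.exp ((2 * Real.pi * (t.val : ℝ) / p : ℝ) * Complex.I) := by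
  rw [omg]; push_cast; ring_nf

lemma norm_omg (t : ZMod p) : ‖omg p t‖ = 1 := by
  rw [omg_eq_real, Complex.norm_exp_ofReal_mul_I]

lemma omg_ne_zero (t : ZMod p) : omg p t ≠ 0 := by
  intro h; have := norm_omg t; rw [h] at this; simp at this

lemma omg_ne_one {t : ZMod p} (h : t ≠ 0) : omg p t ≠ 1 := by
  rw [omg_eq_pow]
  exact (prim (p := p)).pow_ne_one_of_pos_of_lt
    (fun h' => h ((ZMod.val_eq_zero t).mp h')) (ZMod.val_lt t)

lemma star_omg (t : ZMod p) : star (omg p t) = omg p (-t) := by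
  have h1 : omg p t * star (omg p t) = 1 := by
    have h := Complex.mul_conj (omg p t)
    rw [Complex.normSq_eq_norm_sq, norm_omg] at h
    simpa using h
  have h2 : omg p t * omg p (-t) = 1 := by rw [← omg_add]; simp [omg_zero]
  exact mul_left_cancel₀ (omg_ne_zero t) (h1.trans h2.symm)

def dotp (ξ x : Vec p n) : ZMod p := ∑ i, ξ i * x i

lemma dotp_comm (ξ x : Vec p n) : dotp ξ x = dotp x ξ := by
  unfold dotp; exact Finset.sum_congr rfl fun i _ => mul_comm _ _

lemma dotp_add_right (ξ x y : Vec p n) : dotp ξ (x + y) = dotp ξ x + dotp ξ y := by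
  unfold dotp; rw [← Finset.sum_add_distrib]
  exact Finset.sum_congr rfl fun i _ => by simp [mul_add]

lemma dotp_sub_right (ξ x y : Vec p n) : dotp ξ (x - y) = dotp ξ x - dotp ξ y := by
  unfold dotp; rw [← Finset.sum_sub_distrib]
  exact Finset.sum_congr rfl fun i _ => by simp [mul_sub]

lemma dotp_zero_right (ξ : Vec p n) : dotp ξ 0 = 0 := by simp [dotp]

lemma dotp_sub_left (ξ η x : Vec p n) : dotp (ξ - η) x = dotp ξ x - dotp η x := by
  rw [dotp_comm, dotp_sub_right, dotp_comm x ξ, dotp_comm x η]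

noncomputable def ch (ξ x : Vec p n) : ℂ := omg p (dotp ξ x)

lemma ch_comm (ξ x : Vec p n) : ch ξ x = ch x ξ := by rw [ch, ch, dotp_comm]

lemma ch_add_right (ξ x y : Vec p n) : ch ξ (x + y) = ch ξ x * ch ξ y := by
  rw [ch, ch, ch, dotp_add_right, omg_add]

lemma ch_mul_star (ξ η x : Vec p n) : ch ξ x * star (ch η x) = ch (ξ - η) x := by
  rw [ch, ch, ch, star_omg, ← omg_add, dotp_sub_left, sub_eq_add_neg]

lemma star_ch_mul (ξ x y : Vec p n) : star (ch ξ x) * ch ξ y = ch ξ (y - x) := by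
  rw [ch, ch, ch, star_omg, ← omg_add, dotp_sub_right, neg_add_eq_sub]

lemma norm_ch (ξ x : Vec p n) : ‖ch ξ x‖ = 1 := norm_omg _

lemma ch_zero_left (x : Vec p n) : ch (0 : Vec p n) x = 1 := by
  rw [ch, dotp_comm, dotp_zero_right, omg_zero]

lemma sum_ch {ξ : Vec p n} (h : ξ ≠ 0) : ∑ x : Vec p n, ch ξ x = 0 := by
  obtain ⟨i, hi⟩ := Function.ne_iff.mp h
  set v0 : Vec p n := Pi.single i (ξ i)⁻¹ with hv0
  have hdot : dotp ξ v0 = 1 := by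
    rw [dotp, Finset.sum_eq_single i]
    · rw [hv0, Pi.single_eq_same, mul_inv_cancel₀ hi]
    · intro j _ hj; rw [hv0, Pi.single_eq_of_ne hj, mul_zero]
    · intro h'; exact absurd (Finset.mem_univ i) h'
  have key : omg p 1 * ∑ x : Vec p n, ch ξ x = ∑ x : Vec p n, ch ξ x := by
    rw [Finset.mul_sum]
    rw [show ∑ x : Vec p n, omg p 1 * ch ξ x = ∑ x : Vec p n, ch ξ (v0 + x) from
      Finset.sum_congr rfl fun x _ => by
        rw [ch_add_right]; congr 1; rw [ch, hdot]]
    exact Fintype.sum_equiv (Equiv.addLeft v0) _ _ (fun x => rfl)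
  have key2 : (omg p 1 - 1) * ∑ x : Vec p n, ch ξ x = 0 := by linear_combination key
  have hne : omg p 1 - 1 ≠ 0 := sub_ne_zero.mpr (omg_ne_one one_ne_zero)
  exact (mul_eq_zero.mp key2).resolve_left hne

lemma sum_ch_eq (ξ : Vec p n) :
    ∑ x : Vec p n, ch ξ x = if ξ = 0 then (Fintype.card (Vec p n) : ℂ) else 0 := by
  split_ifs with h
  · subst h; simp [ch_zero_left]
  · exact sum_ch h

lemma sum_ch_mul (ξ η : Vec p n) :
    ∑ x : Vec p n, ch ξ x * star (ch η x) =
      if ξ = η then (Fintype.card (Vec p n) : ℂ) else 0 := by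
  simp_rw [ch_mul_star, sum_ch_eq, sub_eq_zero]


lemma Nc_ne_zero : (Fintype.card (Vec p n) : ℂ) ≠ 0 :=
  Nat.cast_ne_zero.mpr Fintype.card_ne_zero

lemma mul_star_self (z : ℂ) : z * star z = ((‖z‖ ^ 2 : ℝ) : ℂ) := by
  have h := Complex.mul_conj z
  rw [Complex.normSq_eq_norm_sq] at h
  exact_mod_cast h

noncomputable def four (f : Vec p n → ℂ) (ξ : Vec p n) : ℂ :=
  avgC (fun x => f x * star (ch ξ x))

lemma parseval_sum (g h : Vec p n → ℂ) :
    ∑ ξ : Vec p n, (∑ x, g x * star (ch ξ x)) * star (∑ y, h y * star (ch ξ y)) =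
      (Fintype.card (Vec p n) : ℂ) * ∑ x, g x * star (h x) := by
  have step : ∀ ξ : Vec p n,
      (∑ x, g x * star (ch ξ x)) * star (∑ y, h y * star (ch ξ y))
      = ∑ x, ∑ y, g x * star (h y) * ch (y - x) ξ := by
    intro ξ
    simp only [star_sum, star_mul, star_star, Finset.sum_mul_sum]
    refine Finset.sum_congr rfl fun x _ => Finset.sum_congr rfl fun y _ => ?_
    calc g x * star (ch ξ x) * (ch ξ y * star (h y))
        = g x * star (h y) * (star (ch ξ x) * ch ξ y) := by ring
      _ = g x * star (h y) * ch (y - x) ξ := by rw [star_ch_mul, ch_comm]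
  simp_rw [step]
  rw [Finset.sum_comm]
  have inner : ∀ x : Vec p n,
      ∑ ξ : Vec p n, ∑ y : Vec p n, g x * star (h y) * ch (y - x) ξ
        = (Fintype.card (Vec p n) : ℂ) * (g x * star (h x)) := by
    intro x
    rw [Finset.sum_comm]
    have : ∀ y : Vec p n, ∑ ξ : Vec p n, g x * star (h y) * ch (y - x) ξ
        = if y = x then g x * star (h y) * (Fintype.card (Vec p n) : ℂ) else 0 := by
      intro y
      rw [← Finset.mul_sum, sum_ch_eq]
      simp only [sub_eq_zero]
      split_ifs <;> simp
    simp_rw [this]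
    rw [Finset.sum_ite_eq' Finset.univ x
      (fun y => g x * star (h y) * (Fintype.card (Vec p n) : ℂ))]
    simp [mul_comm]
  simp_rw [inner, ← Finset.mul_sum]

lemma parseval (g h : Vec p n → ℂ) :
    inprod g h = ∑ ξ : Vec p n, four g ξ * star (four h ξ) := by
  have hN : (Fintype.card (Vec p n) : ℂ) ≠ 0 := Nc_ne_zero
  unfold inprod four avgC
  simp only [star_div₀, star_natCast, div_mul_div_comm, ← Finset.sum_div]
  rw [parseval_sum, mul_div_mul_left _ _ hN]

noncomputable def synth (c : Vec p n → ℂ) : Vec p n → ℂ := fun x => ∑ ξ, c ξ * ch ξ x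

lemma four_synth (c : Vec p n → ℂ) : four (synth c) = c := by
  funext η
  unfold four synth avgC
  have expand : ∀ x : Vec p n, (∑ ξ, c ξ * ch ξ x) * star (ch η x)
      = ∑ ξ, c ξ * ch (ξ - η) x := by
    intro x
    rw [Finset.sum_mul]
    exact Finset.sum_congr rfl fun ξ _ => by rw [mul_assoc, ch_mul_star]
  simp_rw [expand]
  rw [Finset.sum_comm]
  simp_rw [← Finset.mul_sum, sum_ch_eq, sub_eq_zero, mul_ite, mul_zero]
  rw [Finset.sum_ite_eq' Finset.univ η (fun ξ => c ξ * (Fintype.card (Vec p n) : ℂ))]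
  simp [mul_div_assoc, div_self Nc_ne_zero]

lemma synth_four (f : Vec p n → ℂ) : synth (four f) = f := by
  funext x
  unfold synth four avgC
  simp_rw [div_mul_eq_mul_div, ← Finset.sum_div]
  have expand : ∀ ξ : Vec p n, (∑ y, f y * star (ch ξ y)) * ch ξ x
      = ∑ y, f y * ch (x - y) ξ := by
    intro ξ
    rw [Finset.sum_mul]
    refine Finset.sum_congr rfl fun y _ => ?_
    rw [mul_assoc, star_ch_mul, ch_comm]
  simp_rw [expand]
  rw [Finset.sum_comm]
  simp_rw [← Finset.mul_sum, sum_ch_eq, sub_eq_zero, mul_ite, mul_zero]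
  rw [Finset.sum_ite_eq Finset.univ x (fun y => f y * (Fintype.card (Vec p n) : ℂ))]
  simp [mul_div_assoc, div_self Nc_ne_zero]

lemma triple_sum (f : Vec p n → ℂ) :
    ∑ t : Vec p n × Vec p n × Vec p n,
      f t.1 * star (f (t.1 + t.2.1)) * star (f (t.1 + t.2.2)) * f (t.1 + t.2.1 + t.2.2)
    = ∑ a : Vec p n, (∑ x, f x * star (f (x + a))) *
        star (∑ y, f y * star (f (y + a))) := by
  rw [Fintype.sum_prod_type]
  simp_rw [Fintype.sum_prod_type]
  rw [Finset.sum_comm]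
  refine Finset.sum_congr rfl fun a _ => ?_
  rw [Finset.sum_mul]
  refine Finset.sum_congr rfl fun x _ => ?_
  have sub : ∑ b : Vec p n, f x * star (f (x + a)) * star (f (x + b)) * f (x + a + b)
      = ∑ y : Vec p n, f x * star (f (x + a)) * star (f y) * f (y + a) := by
    refine Fintype.sum_equiv (Equiv.addLeft x) _ _ fun b => ?_
    simp only [Equiv.coe_addLeft]
    rw [add_right_comm]
  rw [sub]
  simp only [star_sum, star_mul, star_star, Finset.mul_sum]
  exact Finset.sum_congr rfl fun y _ => by ring

lemma Phi_eq (c : Vec p n → ℂ) (a : Vec p n) :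
    ∑ x : Vec p n, synth c x * star (synth c (x + a)) =
      (Fintype.card (Vec p n) : ℂ) *
        ∑ η : Vec p n, ((‖c η‖ ^ 2 : ℝ) : ℂ) * star (ch η a) := by
  unfold synth
  have expand : ∀ x : Vec p n,
      (∑ ξ, c ξ * ch ξ x) * star (∑ η, c η * ch η (x + a))
      = ∑ ξ, ∑ η, c ξ * star (c η) * star (ch η a) * ch (ξ - η) x := by
    intro x
    simp only [star_sum, star_mul, Finset.sum_mul_sum]
    refine Finset.sum_congr rfl fun ξ _ => Finset.sum_congr rfl fun η _ => ?_
    rw [ch_add_right, star_mul, ← ch_mul_star ξ η x]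
    ring
  simp_rw [expand]
  rw [Finset.sum_comm]
  have inner : ∀ ξ : Vec p n,
      ∑ x : Vec p n, ∑ η : Vec p n, c ξ * star (c η) * star (ch η a) * ch (ξ - η) x
      = c ξ * star (c ξ) * star (ch ξ a) * (Fintype.card (Vec p n) : ℂ) := by
    intro ξ
    rw [Finset.sum_comm]
    have : ∀ η : Vec p n, ∑ x : Vec p n, c ξ * star (c η) * star (ch η a) * ch (ξ - η) x
        = if η = ξ then c ξ * star (c η) * star (ch η a) * (Fintype.card (Vec p n) : ℂ)
          else 0 := by
      intro η
      rw [← Finset.mul_sum, sum_ch_eq]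
      simp only [sub_eq_zero]
      rcases eq_or_ne ξ η with h | h
      · simp [h]
      · simp [h, Ne.symm h]
    simp_rw [this]
    rw [Finset.sum_ite_eq' Finset.univ ξ]
    simp
  simp_rw [inner, mul_star_self]
  rw [Finset.mul_sum]
  exact Finset.sum_congr rfl fun ξ _ => by ring

lemma sum_sq_Phi (c : Vec p n → ℂ) :
    ∑ a : Vec p n, (∑ x, synth c x * star (synth c (x + a))) *
        star (∑ y, synth c y * star (synth c (y + a)))
      = (Fintype.card (Vec p n) : ℂ) ^ 3 * ∑ η : Vec p n, ((‖c η‖ ^ 4 : ℝ) : ℂ) := by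
  have sum_S : ∀ r : Vec p n → ℂ,
      ∑ a : Vec p n, (∑ η, r η * star (ch η a)) * star (∑ ρ, r ρ * star (ch ρ a))
        = (Fintype.card (Vec p n) : ℂ) * ∑ η, r η * star (r η) := by
    intro r
    have e1 : ∀ a η : Vec p n, ch η a = ch a η := fun a η => ch_comm η a
    calc ∑ a : Vec p n, (∑ η, r η * star (ch η a)) * star (∑ ρ, r ρ * star (ch ρ a))
        = ∑ a : Vec p n, (∑ η, r η * star (ch a η)) * star (∑ ρ, r ρ * star (ch a ρ)) :=
          Finset.sum_congr rfl fun a _ => by simp_rw [e1 a]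
      _ = _ := parseval_sum r r
  simp_rw [Phi_eq]
  calc ∑ a : Vec p n, (Fintype.card (Vec p n) : ℂ) *
          (∑ η, ((‖c η‖ ^ 2 : ℝ) : ℂ) * star (ch η a)) *
          star ((Fintype.card (Vec p n) : ℂ) *
            (∑ ρ, ((‖c ρ‖ ^ 2 : ℝ) : ℂ) * star (ch ρ a)))
      = (Fintype.card (Vec p n) : ℂ) ^ 2 *
          ∑ a : Vec p n, (∑ η, ((‖c η‖ ^ 2 : ℝ) : ℂ) * star (ch η a)) *
            star (∑ ρ, ((‖c ρ‖ ^ 2 : ℝ) : ℂ) * star (ch ρ a)) := by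
        rw [Finset.mul_sum]
        refine Finset.sum_congr rfl fun a _ => ?_
        simp only [star_mul, star_natCast]
        ring
    _ = (Fintype.card (Vec p n) : ℂ) ^ 2 * ((Fintype.card (Vec p n) : ℂ) *
          ∑ η, ((‖c η‖ ^ 2 : ℝ) : ℂ) * star (((‖c η‖ ^ 2 : ℝ) : ℂ))) := by
        rw [sum_S]
    _ = _ := by
        simp only [RCLike.star_def, Complex.conj_ofReal, Finset.mul_sum]
        refine Finset.sum_congr rfl fun η _ => ?_
        push_cast
        ring

lemma card_triple :
    Fintype.card (Vec p n × Vec p n × Vec p n) = (Fintype.card (Vec p n)) ^ 3 := by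
  simp [Fintype.card_prod]; ring

lemma U2_synth (c : Vec p n → ℂ) :
    U2 (synth c) = (∑ η : Vec p n, ‖c η‖ ^ 4) ^ ((1 : ℝ) / 4) := by
  have hs : (0 : ℝ) ≤ ∑ η : Vec p n, ‖c η‖ ^ 4 :=
    Finset.sum_nonneg fun _ _ => by positivity
  unfold U2 avgC
  rw [triple_sum, sum_sq_Phi, card_triple]
  have h1 : (Fintype.card (Vec p n) : ℂ) ^ 3 * (∑ η, ((‖c η‖ ^ 4 : ℝ) : ℂ)) /
      ((Fintype.card (Vec p n) ^ 3 : ℕ) : ℂ) = ((∑ η : Vec p n, ‖c η‖ ^ 4 : ℝ) : ℂ) := by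
    push_cast
    rw [mul_comm, mul_div_assoc, div_self (pow_ne_zero 3 Nc_ne_zero), mul_one]
  rw [h1, Complex.norm_real, Real.norm_eq_abs, abs_of_nonneg hs]

lemma U2_eq (f : Vec p n → ℂ) :
    U2 f = (∑ η : Vec p n, ‖four f η‖ ^ 4) ^ ((1 : ℝ) / 4) := by
  conv_lhs => rw [← synth_four f]
  rw [U2_synth]

lemma four_sub (f g : Vec p n → ℂ) (ξ : Vec p n) :
    four (fun x => f x - g x) ξ = four f ξ - four g ξ := by
  unfold four avgC
  rw [← sub_div]
  congr 1
  rw [← Finset.sum_sub_distrib]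
  exact Finset.sum_congr rfl fun x _ => by ring

lemma four_smul (a : ℂ) (f : Vec p n → ℂ) (ξ : Vec p n) :
    four (fun x => a * f x) ξ = a * four f ξ := by
  simp only [four, avgC]
  rw [← mul_div_assoc, Finset.mul_sum]
  congr 1
  exact Finset.sum_congr rfl fun x _ => by ring

lemma inprod_smul_left (a : ℂ) (f g : Vec p n → ℂ) :
    inprod (fun x => a * f x) g = a * inprod f g := by
  simp only [inprod, avgC]
  rw [← mul_div_assoc, Finset.mul_sum]
  congr 1
  exact Finset.sum_congr rfl fun x _ => by ring

lemma avgC_ofReal {α : Type*} [Fintype α] (r : α → ℝ) :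
    avgC (fun x => ((r x : ℝ) : ℂ)) = ((avgR r : ℝ) : ℂ) := by
  unfold avgC avgR
  push_cast
  ring

lemma inprod_self (g : Vec p n → ℂ) :
    inprod g g = ((avgR fun x => ‖g x‖ ^ 2 : ℝ) : ℂ) := by
  unfold inprod
  rw [show (fun x => g x * star (g x)) = fun x => ((‖g x‖ ^ 2 : ℝ) : ℂ) from
    funext fun x => mul_star_self _, avgC_ofReal]

lemma L2_eq (g : Vec p n → ℂ) : L2 g = Real.sqrt (∑ ξ : Vec p n, ‖four g ξ‖ ^ 2) := by
  unfold L2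
  congr 1
  have h := (inprod_self g).symm.trans (parseval g g)
  have h2 : ∑ ξ : Vec p n, four g ξ * star (four g ξ)
      = ((∑ ξ : Vec p n, ‖four g ξ‖ ^ 2 : ℝ) : ℂ) := by
    push_cast
    exact Finset.sum_congr rfl fun ξ _ => by rw [mul_star_self]; push_cast; ring
  rw [h2] at h
  exact_mod_cast h

lemma mem_subFinset {V : Submodule (ZMod p) (Vec p n)} {v : Vec p n} :
    v ∈ subFinset V ↔ v ∈ V := by
  simp [subFinset]

lemma card_subFinset_ne_zero (V : Submodule (ZMod p) (Vec p n)) :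
    (subFinset V).card ≠ 0 :=
  Finset.card_ne_zero_of_mem (mem_subFinset.mpr V.zero_mem)

lemma sum_ch_sub (V : Submodule (ZMod p) (Vec p n)) (ξ : Vec p n)
    (h : ∃ v ∈ V, dotp ξ v ≠ 0) : ∑ v ∈ subFinset V, ch ξ v = 0 := by
  obtain ⟨v0, hv0, hc⟩ := h
  have key : omg p (dotp ξ v0) * ∑ v ∈ subFinset V, ch ξ v
      = ∑ v ∈ subFinset V, ch ξ v := by
    rw [Finset.mul_sum]
    rw [show ∑ v ∈ subFinset V, omg p (dotp ξ v0) * ch ξ v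
        = ∑ v ∈ subFinset V, ch ξ (v0 + v) from Finset.sum_congr rfl fun v _ => by
          rw [ch_add_right]; rfl]
    refine Finset.sum_nbij' (fun v => v0 + v) (fun v => v - v0) ?_ ?_ ?_ ?_ ?_
    · intro a ha
      exact mem_subFinset.mpr (V.add_mem hv0 (mem_subFinset.mp ha))
    · intro a ha
      exact mem_subFinset.mpr (V.sub_mem (mem_subFinset.mp ha) hv0)
    · intro a _; rw [add_sub_cancel_left]
    · intro a _; rw [add_comm, sub_add_cancel]
    · intro a _; rfl
  have key2 : (omg p (dotp ξ v0) - 1) * ∑ v ∈ subFinset V, ch ξ v = 0 := by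
    linear_combination key
  have hne : omg p (dotp ξ v0) - 1 ≠ 0 := sub_ne_zero.mpr (omg_ne_one hc)
  exact (mul_eq_zero.mp key2).resolve_left hne

lemma ch_zero_right (ξ : Vec p n) : ch ξ 0 = 1 := by
  rw [ch, dotp_zero_right, omg_zero]

lemma four_convMu (f : Vec p n → ℂ) (V : Submodule (ZMod p) (Vec p n)) (ξ : Vec p n) :
    four (convMu f V) ξ
      = four f ξ * ((∑ v ∈ subFinset V, ch ξ v) / ((subFinset V).card : ℂ)) := by
  have key : ∑ x : Vec p n, (∑ v ∈ subFinset V, f (x + v)) * star (ch ξ x)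
      = (∑ y : Vec p n, f y * star (ch ξ y)) * (∑ v ∈ subFinset V, ch ξ v) := by
    have swap : ∑ x : Vec p n, (∑ v ∈ subFinset V, f (x + v)) * star (ch ξ x)
        = ∑ v ∈ subFinset V, ∑ x : Vec p n, f (x + v) * star (ch ξ x) := by
      simp_rw [Finset.sum_mul]
      exact Finset.sum_comm
    rw [swap, Finset.mul_sum]
    refine Finset.sum_congr rfl fun v _ => ?_
    have h1 : star (ch ξ v) * ch ξ v = 1 := by
      rw [star_ch_mul, sub_self, ch_zero_right]
    have sub : ∑ x : Vec p n, f (x + v) * star (ch ξ x)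
        = ∑ y : Vec p n, f y * star (ch ξ y) * ch ξ v := by
      refine Fintype.sum_equiv (Equiv.addRight v) _ _ fun x => ?_
      simp only [Equiv.coe_addRight]
      rw [ch_add_right, star_mul]
      linear_combination (-(f (x + v) * star (ch ξ x))) * h1
    rw [sub, Finset.sum_mul]
  unfold four convMu avgC
  simp_rw [div_mul_eq_mul_div, ← Finset.sum_div]
  rw [key]
  ring

open scoped Classical in
lemma four_convMu_ite (f : Vec p n → ℂ) (V : Submodule (ZMod p) (Vec p n)) (ξ : Vec p n) :
    four (convMu f V) ξ = if ∀ v ∈ V, dotp ξ v = 0 then four f ξ else 0 := by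
  rw [four_convMu]
  split_ifs with h
  · have hc : ∑ v ∈ subFinset V, ch ξ v = ((subFinset V).card : ℂ) := by
      rw [Finset.sum_congr rfl (fun v hv => show ch ξ v = 1 from by
        rw [ch, h v (mem_subFinset.mp hv), omg_zero])]
      simp
    rw [hc, div_self (Nat.cast_ne_zero.mpr (card_subFinset_ne_zero V)), mul_one]
  · push_neg at h
    rw [sum_ch_sub V ξ h, zero_div, mul_zero]

lemma rpow_quarter {x : ℝ} (hx : 0 ≤ x) : (x ^ (4 : ℕ)) ^ ((1 : ℝ) / 4) = x := by
  rw [← Real.rpow_natCast x 4, ← Real.rpow_mul hx]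
  norm_num

lemma norm_four_le_U2 (h : Vec p n → ℂ) (ξ : Vec p n) : ‖four h ξ‖ ≤ U2 h := by
  rw [U2_eq]
  have h4 : ‖four h ξ‖ ^ 4 ≤ ∑ η : Vec p n, ‖four h η‖ ^ 4 :=
    Finset.single_le_sum (f := fun η => ‖four h η‖ ^ 4)
      (fun _ _ => by positivity) (Finset.mem_univ ξ)
  calc ‖four h ξ‖ = (‖four h ξ‖ ^ (4 : ℕ)) ^ ((1 : ℝ) / 4) :=
        (rpow_quarter (norm_nonneg _)).symm
    _ ≤ _ := Real.rpow_le_rpow (by positivity) h4 (by norm_num)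

lemma dual_bdd (f : Vec p n → ℂ) :
    BddAbove {r : ℝ | ∃ h : Vec p n → ℂ, U2 h ≤ 1 ∧ r = ‖inprod h f‖} := by
  refine ⟨∑ ξ : Vec p n, ‖four f ξ‖, ?_⟩
  rintro r ⟨h, hU, rfl⟩
  rw [parseval]
  calc ‖∑ ξ : Vec p n, four h ξ * star (four f ξ)‖
      ≤ ∑ ξ : Vec p n, ‖four h ξ * star (four f ξ)‖ := norm_sum_le _ _
    _ ≤ ∑ ξ : Vec p n, ‖four f ξ‖ := by
        refine Finset.sum_le_sum fun ξ _ => ?_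
        rw [norm_mul, norm_star]
        calc ‖four h ξ‖ * ‖four f ξ‖ ≤ 1 * ‖four f ξ‖ :=
              mul_le_mul_of_nonneg_right ((norm_four_le_U2 h ξ).trans hU) (norm_nonneg _)
          _ = ‖four f ξ‖ := one_mul _

lemma U2_nonneg (g : Vec p n → ℂ) : 0 ≤ U2 g :=
  Real.rpow_nonneg (norm_nonneg _) _

lemma U2_smul (a : ℂ) (g : Vec p n → ℂ) : U2 (fun x => a * g x) = ‖a‖ * U2 g := by
  rw [U2_eq, U2_eq]
  have e : ∀ η : Vec p n, four (fun x => a * g x) η = a * four g η := four_smul a g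
  simp_rw [e, norm_mul, mul_pow, ← Finset.mul_sum]
  rw [Real.mul_rpow (by positivity) (Finset.sum_nonneg fun _ _ => by positivity),
    rpow_quarter (norm_nonneg a)]

lemma dual_le {f : Vec p n → ℂ} {T : ℝ} (hf : U2dual f ≤ T) (g : Vec p n → ℂ) :
    ‖inprod g f‖ ≤ T * U2 g := by
  have hU0 : 0 ≤ U2 g := U2_nonneg g
  rcases hU0.eq_or_lt with h0 | hpos
  · have hz : ∀ ξ, four g ξ = 0 := by
      intro ξ
      have h1 := norm_four_le_U2 g ξ
      rw [← h0] at h1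
      exact norm_le_zero_iff.mp h1
    rw [parseval]
    simp [hz, ← h0]
  · set g' : Vec p n → ℂ := fun x => (((U2 g)⁻¹ : ℝ) : ℂ) * g x with hg'
    have hU2g' : U2 g' = 1 := by
      rw [hg', U2_smul, Complex.norm_real, Real.norm_eq_abs,
        abs_of_nonneg (inv_nonneg.mpr hU0), inv_mul_cancel₀ (ne_of_gt hpos)]
    have hmem : ‖inprod g' f‖ ∈ {r : ℝ | ∃ h : Vec p n → ℂ, U2 h ≤ 1 ∧ r = ‖inprod h f‖} :=
      ⟨g', le_of_eq hU2g', rfl⟩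
    have hle : ‖inprod g' f‖ ≤ T := le_trans (le_csSup (dual_bdd f) hmem) hf
    have heq : ‖inprod g' f‖ = (U2 g)⁻¹ * ‖inprod g f‖ := by
      rw [hg', inprod_smul_left, norm_mul, Complex.norm_real, Real.norm_eq_abs,
        abs_of_nonneg (inv_nonneg.mpr hU0)]
    rw [heq] at hle
    calc ‖inprod g f‖ = U2 g * ((U2 g)⁻¹ * ‖inprod g f‖) := by
          field_simp
      _ ≤ U2 g * T := mul_le_mul_of_nonneg_left hle hU0
      _ = T * U2 g := mul_comm _ _

noncomputable def lmap (ξ : Vec p n) : Vec p n →ₗ[ZMod p] ZMod p where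
  toFun := dotp ξ
  map_add' := dotp_add_right ξ
  map_smul' c x := by
    simp only [dotp, Pi.smul_apply, smul_eq_mul, RingHom.id_apply]
    rw [Finset.mul_sum]
    exact Finset.sum_congr rfl fun i _ => by ring

lemma finrank_ker_inf (W : Submodule (ZMod p) (Vec p n))
    (l : Vec p n →ₗ[ZMod p] ZMod p) :
    Module.finrank (ZMod p) W ≤
      Module.finrank (ZMod p) ((LinearMap.ker l ⊓ W : Submodule (ZMod p) (Vec p n))) + 1 := by
  have h := LinearMap.finrank_range_add_finrank_ker (l.domRestrict W)
  have e1 : Submodule.comap W.subtype (LinearMap.ker l)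
      = Submodule.comap W.subtype (LinearMap.ker l ⊓ W) := by
    rw [Submodule.comap_inf, Submodule.comap_subtype_self, inf_top_eq]
  have e2 : Module.finrank (ZMod p) (LinearMap.ker (l.domRestrict W))
      = Module.finrank (ZMod p) ((LinearMap.ker l ⊓ W : Submodule (ZMod p) (Vec p n))) := by
    rw [LinearMap.ker_domRestrict, e1]
    exact (Submodule.comapSubtypeEquivOfLe inf_le_right).finrank_eq
  have hr : Module.finrank (ZMod p) (LinearMap.range (l.domRestrict W)) ≤ 1 := by
    have := Submodule.finrank_le (LinearMap.range (l.domRestrict W))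
    simpa [Module.finrank_self] using this
  omega

lemma finrank_iInf_ker (S : Finset (Vec p n)) :
    n ≤ Module.finrank (ZMod p)
        ((⨅ ξ ∈ S, LinearMap.ker (lmap ξ)) : Submodule (ZMod p) (Vec p n)) + S.card := by
  classical
  induction S using Finset.induction with
  | empty =>
      rw [show ((⨅ ξ ∈ (∅ : Finset (Vec p n)), LinearMap.ker (lmap ξ)) :
          Submodule (ZMod p) (Vec p n)) = ⊤ by simp]
      rw [finrank_top, Module.finrank_fin_fun, Finset.card_empty, add_zero]
  | @insert a S ha ih =>
      rw [Finset.iInf_insert, Finset.card_insert_of_notMem ha]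
      have h1 := finrank_ker_inf ((⨅ ξ ∈ S, LinearMap.ker (lmap ξ)) :
        Submodule (ZMod p) (Vec p n)) (lmap a)
      omega

lemma quarter_pow {x : ℝ} (hx : 0 ≤ x) : (x ^ ((1:ℝ)/4)) ^ (4:ℕ) = x := by
  rw [← Real.rpow_natCast (x ^ ((1:ℝ)/4)) 4, ← Real.rpow_mul hx]
  norm_num

end St13

open St13

/-- Lemma 5.2, Bogolyubov. If `‖f‖_{U²}^* ≤ T`, then there is a
subspace `V` of codimension at most `δ⁻⁴T⁴` with `‖f - f*μ_V‖₂ ≤ δ`. -/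
theorem stmt13 (p : ℕ) [Fact p.Prime] (n : ℕ) (δ T : ℝ) (hδ : 0 < δ) (hT : 0 < T)
    (f : Vec p n → ℂ) (hf : U2dual f ≤ T) :
    ∃ V : Submodule (ZMod p) (Vec p n),
      ((n - Module.finrank (ZMod p) V : ℕ) : ℝ) ≤ δ ^ (-4 : ℤ) * T ^ 4 ∧
      L2 (fun x => f x - convMu f V x) ≤ δ := by
  classical
  set ε : ℝ := δ ^ 3 / T ^ 2 with hεdef
  have hεpos : 0 < ε := by positivity
  set S : Finset (Vec p n) := Finset.univ.filter (fun ξ => ε ≤ ‖four f ξ‖) with hSdef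
  set V : Submodule (ZMod p) (Vec p n) := ⨅ ξ ∈ S, LinearMap.ker (lmap ξ) with hVdef
  have hzT4 : δ ^ (-4 : ℤ) * T ^ 4 = T ^ 4 / δ ^ 4 := by
    have h1 : δ ^ (-4:ℤ) = (δ ^ (4:ℕ))⁻¹ := by
      rw [zpow_neg]; norm_cast
    rw [h1]; field_simp
  refine ⟨V, ?_, ?_⟩
  · -- codimension bound
    have hrank := finrank_iInf_ker (p := p) (n := n) S
    rw [← hVdef] at hrank
    have h1 : (n - Module.finrank (ZMod p) V : ℕ) ≤ S.card := by omega
    have hcard : (S.card : ℝ) ≤ T ^ 4 / δ ^ 4 := by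
      rcases Finset.eq_empty_or_nonempty S with hS0 | hS0
      · rw [hS0]; simp; positivity
      · set c : Vec p n → ℂ :=
          fun ξ => if ξ ∈ S then four f ξ / ((‖four f ξ‖ : ℝ) : ℂ) else 0 with hcdef
        have hmemS : ∀ ξ ∈ S, ε ≤ ‖four f ξ‖ := by
          intro ξ hξ
          exact (Finset.mem_filter.mp hξ).2
        have hnormc : ∀ ξ ∈ S, ‖c ξ‖ = 1 := by
          intro ξ hξ
          have hne : ‖four f ξ‖ ≠ 0 := by have := hmemS ξ hξ; linarith
          rw [hcdef]
          simp only [if_pos hξ, norm_div, Complex.norm_real, Real.norm_eq_abs,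
            abs_of_nonneg (norm_nonneg _)]
          exact div_self (by exact hne)
        have hterm : ∀ η : Vec p n, ‖c η‖^4 = if η ∈ S then (1:ℝ) else 0 := by
          intro η
          by_cases hη : η ∈ S
          · rw [hnormc η hη]; simp [hη]
          · rw [hcdef]; simp [hη]
        have hU2c : U2 (synth c) = ((S.card : ℝ)) ^ ((1:ℝ)/4) := by
          rw [U2_synth]
          congr 1
          simp_rw [hterm]
          simp [Finset.sum_ite_mem]
        have hip : inprod (synth c) f = ((∑ η ∈ S, ‖four f η‖ : ℝ) : ℂ) := by
          rw [parseval, four_synth]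
          have hterm2 : ∀ η : Vec p n, c η * star (four f η)
              = if η ∈ S then ((‖four f η‖ : ℝ) : ℂ) else 0 := by
            intro η
            by_cases hη : η ∈ S
            · have hne : ‖four f η‖ ≠ 0 := by have := hmemS η hη; linarith
              rw [hcdef]
              simp only [if_pos hη]
              rw [div_mul_eq_mul_div, mul_star_self]
              rw [show ((‖four f η‖^2 : ℝ):ℂ)
                  = ((‖four f η‖:ℝ):ℂ) * ((‖four f η‖:ℝ):ℂ) by push_cast; ring]
              rw [mul_div_assoc, div_self (by exact_mod_cast hne), mul_one]
            · rw [hcdef]; simp [hη]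
          simp_rw [hterm2]
          rw [Finset.sum_ite_mem]
          simp only [Finset.univ_inter]
          push_cast
          rfl
        have hnormip : ‖inprod (synth c) f‖ = ∑ η ∈ S, ‖four f η‖ := by
          rw [hip, Complex.norm_real, Real.norm_eq_abs,
            abs_of_nonneg (Finset.sum_nonneg fun _ _ => norm_nonneg _)]
        have hdual := dual_le hf (synth c)
        rw [hnormip, hU2c] at hdual
        have hlower : ε * (S.card : ℝ) ≤ ∑ η ∈ S, ‖four f η‖ := by
          calc ε * (S.card : ℝ) = ∑ _η ∈ S, ε := by
                rw [Finset.sum_const, nsmul_eq_mul]; ring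
            _ ≤ _ := Finset.sum_le_sum hmemS
        set s : ℝ := (S.card : ℝ) with hs
        have hs0 : (0:ℝ) ≤ s := Nat.cast_nonneg _
        have key : ε * s ≤ T * s ^ ((1:ℝ)/4) := le_trans hlower hdual
        have h4 : (ε * s)^4 ≤ (T * s ^ ((1:ℝ)/4))^4 :=
          pow_le_pow_left₀ (by positivity) key 4
        have h5 : ε^4 * s^4 ≤ T^4 * s := by
          rw [mul_pow, mul_pow, quarter_pow hs0] at h4
          exact h4
        have hK : (0:ℝ) < T^4/δ^4 := by positivity
        rcases hs0.eq_or_lt with h0 | hs0'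
        · rw [← h0]; exact hK.le
        · have h6 : ε^4 * s^3 ≤ T^4 := by
            have h7 : (ε^4 * s^3) * s ≤ T^4 * s := by nlinarith [h5]
            exact le_of_mul_le_mul_right h7 hs0'
          have h8 : s^3 ≤ (T^4/δ^4)^3 := by
            rw [hεdef] at h6
            have hδ4 : (0:ℝ) < δ^4 := by positivity
            have hT4 : (0:ℝ) < T^4 := by positivity
            rw [div_pow] at h6
            rw [div_pow]
            rw [div_mul_eq_mul_div, div_le_iff₀ (by positivity)] at h6
            rw [le_div_iff₀ (by positivity)]
            nlinarith [h6]
          exact (pow_le_pow_iff_left₀ hs0 hK.le (by norm_num)).mp h8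
    calc ((n - Module.finrank (ZMod p) V : ℕ) : ℝ) ≤ (S.card : ℝ) := Nat.cast_le.mpr h1
      _ ≤ T^4/δ^4 := hcard
      _ = δ ^ (-4:ℤ) * T^4 := hzT4.symm
  · -- L2 bound
    have hPmem : ∀ v, v ∈ V → ∀ ξ ∈ S, dotp ξ v = 0 := by
      intro v hv ξ hξ
      rw [hVdef] at hv
      simp only [Submodule.mem_iInf] at hv
      have := hv ξ hξ
      rw [LinearMap.mem_ker] at this
      exact this
    set d : Vec p n → ℂ :=
      fun ξ => if ∀ v ∈ V, dotp ξ v = 0 then 0 else four f ξ with hddef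
    have hd_pos : ∀ ξ, (∀ v ∈ V, dotp ξ v = 0) → d ξ = 0 :=
      fun ξ hξ => by rw [hddef]; exact if_pos hξ
    have hd_neg : ∀ ξ, ¬(∀ v ∈ V, dotp ξ v = 0) → d ξ = four f ξ :=
      fun ξ hξ => by rw [hddef]; exact if_neg hξ
    have hfourdiff : ∀ ξ, four (fun x => f x - convMu f V x) ξ = d ξ := by
      intro ξ
      rw [four_sub, four_convMu_ite]
      by_cases hξ : ∀ v ∈ V, dotp ξ v = 0
      · rw [if_pos hξ, hd_pos ξ hξ, sub_self]
      · rw [if_neg hξ, hd_neg ξ hξ, sub_zero]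
    set X : ℝ := ∑ ξ : Vec p n, ‖d ξ‖^2 with hXdef
    have hX0 : 0 ≤ X := Finset.sum_nonneg fun _ _ => sq_nonneg _
    have hdbound : ∀ ξ : Vec p n, ‖d ξ‖^4 ≤ ε^2 * ‖d ξ‖^2 := by
      intro ξ
      by_cases hξ : ∀ v ∈ V, dotp ξ v = 0
      · rw [hd_pos ξ hξ]; simp
      · have hdd : d ξ = four f ξ := hd_neg ξ hξ
        have hnotS : ξ ∉ S := by
          intro hξS
          exact hξ (fun v hv => hPmem v hv ξ hξS)
        have hlt : ‖four f ξ‖ < ε := by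
          by_contra hge
          push_neg at hge
          exact hnotS (Finset.mem_filter.mpr ⟨Finset.mem_univ _, hge⟩)
        rw [hdd]
        have h1 : ‖four f ξ‖^2 ≤ ε^2 := by nlinarith [norm_nonneg (four f ξ)]
        calc ‖four f ξ‖^4 = ‖four f ξ‖^2 * ‖four f ξ‖^2 := by ring
          _ ≤ ε^2 * ‖four f ξ‖^2 := mul_le_mul_of_nonneg_right h1 (sq_nonneg _)
    have hip : inprod (synth d) f = ((X : ℝ) : ℂ) := by
      rw [parseval, four_synth, hXdef]
      push_cast
      refine Finset.sum_congr rfl fun ξ _ => ?_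
      by_cases hξ : ∀ v ∈ V, dotp ξ v = 0
      · rw [hd_pos ξ hξ]; simp
      · rw [hd_neg ξ hξ, mul_star_self]
        push_cast
        ring
    have hnormip : ‖inprod (synth d) f‖ = X := by
      rw [hip, Complex.norm_real, Real.norm_eq_abs, abs_of_nonneg hX0]
    set Y : ℝ := ∑ ξ : Vec p n, ‖d ξ‖^4 with hYdef
    have hY0 : 0 ≤ Y := Finset.sum_nonneg fun _ _ => pow_nonneg (norm_nonneg _) 4
    clear_value X Y
    have hYle : Y ≤ ε^2 * X := by
      rw [hYdef, hXdef, Finset.mul_sum]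
      exact Finset.sum_le_sum fun ξ _ => hdbound ξ
    have hdual := dual_le hf (synth d)
    rw [hnormip, U2_synth, ← hYdef] at hdual
    have h4 : X^4 ≤ T^4 * Y := by
      have h4' := pow_le_pow_left₀ hX0 hdual 4
      rw [mul_pow, quarter_pow hY0] at h4'
      exact h4'
    have h6 : X^4 ≤ δ^6 * X := by
      calc X^4 ≤ T^4 * (ε^2 * X) :=
            le_trans h4 (mul_le_mul_of_nonneg_left hYle (by positivity))
        _ = δ^6 * X := by rw [hεdef]; field_simp
    have hXδ : X ≤ δ^2 := by
      by_contra hcon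
      push_neg at hcon
      have h7 : (δ^2)^3 < X^3 :=
        pow_lt_pow_left₀ hcon (sq_nonneg δ) (by norm_num)
      have hXpos : 0 < X := lt_of_le_of_lt (sq_nonneg δ) hcon
      have h8 : δ^6 < X^3 := by
        have he : (δ^2)^3 = δ^6 := by ring
        linarith only [h7, he]
      have h9 : δ^6 * X < X^3 * X := mul_lt_mul_of_pos_right h8 hXpos
      have h10 : X^3 * X = X^4 := by ring
      linarith only [h6, h9, h10]
    have hsum : ∑ ξ : Vec p n, ‖four (fun x => f x - convMu f V x) ξ‖^2 = X := by
      rw [hXdef]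
      exact Finset.sum_congr rfl fun ξ _ => by rw [hfourdiff ξ]
    have hL2 : L2 (fun x => f x - convMu f V x) = Real.sqrt X := by
      rw [L2_eq, hsum]
    rw [hL2]
    calc Real.sqrt X ≤ Real.sqrt (δ^2) := Real.sqrt_le_sqrt hXδ
      _ = δ := Real.sqrt_sq hδ.le
end

section
/- Let p be a prime, let V be a linear subspace of 𝔽_p^n of codimension r, and let f : 𝔽_p^n → ℂ be a function that is constant on the cosets of V. Then ‖f‖_{U^2} ≥ p^{−r/4}‖f‖_2 and ‖f‖_{U^2}^* ≤ p^{r/4}‖f‖_2. -/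
open scoped BigOperators

section Aux
variable {p n : ℕ} [NeZero p]

lemma sum_shift (F : Vec p n → ℂ) (v : Vec p n) : ∑ x, F (x + v) = ∑ x, F x :=
  Fintype.sum_equiv (Equiv.addRight v) _ _ (fun _ => rfl)

lemma sum_shift' (F : Vec p n → ℂ) (v : Vec p n) : ∑ x, F (v + x) = ∑ x, F x :=
  Fintype.sum_equiv (Equiv.addLeft v) _ _ (fun _ => rfl)

lemma mem_subFinset {V : Submodule (ZMod p) (Vec p n)} {a : Vec p n} :
    a ∈ subFinset V ↔ a ∈ V := by
  classical
  simp [subFinset]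

lemma U2_nonneg (g : Vec p n → ℂ) : 0 ≤ U2 g :=
  Real.rpow_nonneg (norm_nonneg _) _

lemma U2_pow_four (g : Vec p n → ℂ) :
    U2 g ^ 4 = (∑ a, ‖∑ x, g x * star (g (x + a))‖ ^ 2) /
      (Fintype.card (Vec p n) : ℝ) ^ 3 := by
  have key : (∑ t : Vec p n × Vec p n × Vec p n,
      g t.1 * star (g (t.1 + t.2.1)) * star (g (t.1 + t.2.2)) *
        g (t.1 + t.2.1 + t.2.2))
      = ((∑ a, ‖∑ x, g x * star (g (x + a))‖ ^ 2 : ℝ) : ℂ) := by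
    rw [Complex.ofReal_sum]
    simp only [Fintype.sum_prod_type]
    rw [Finset.sum_comm]
    refine Finset.sum_congr rfl fun a _ => ?_
    have h1 : ∀ x : Vec p n,
        (∑ b, g x * star (g (x + a)) * star (g (x + b)) * g (x + a + b))
        = (g x * star (g (x + a))) * ∑ y, star (g y) * g (y + a) := by
      intro x
      rw [Finset.mul_sum,
        ← sum_shift' (fun y => g x * star (g (x + a)) * (star (g y) * g (y + a))) x]
      refine Finset.sum_congr rfl fun b _ => ?_
      rw [show x + a + b = x + b + a by ring]
      ring
    simp only [h1]
    rw [← Finset.sum_mul]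
    have h2 : (∑ y, star (g y) * g (y + a)) = star (∑ x, g x * star (g (x + a))) := by
      rw [star_sum]
      refine Finset.sum_congr rfl fun y _ => ?_
      simp [mul_comm]
    rw [h2]
    simp only [RCLike.star_def]
    rw [RCLike.mul_conj (K := ℂ)]
    norm_cast
  rw [U2, ← Real.rpow_natCast (_ ^ ((1:ℝ)/4)) 4, ← Real.rpow_mul (norm_nonneg _),
    show (1:ℝ)/4 * ((4:ℕ):ℝ) = 1 by norm_num, Real.rpow_one]
  rw [avgC, key, Fintype.card_prod, Fintype.card_prod, norm_div]
  rw [Complex.norm_real, Real.norm_of_nonneg (by positivity)]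
  simp [norm_mul, Complex.norm_natCast]
  ring

lemma L2_sq (f : Vec p n → ℂ) :
    L2 f ^ 2 = (∑ x, ‖f x‖ ^ 2) / (Fintype.card (Vec p n) : ℝ) := by
  rw [L2, Real.sq_sqrt (by unfold avgR; positivity)]
  rfl

lemma L2_nonneg (f : Vec p n → ℂ) : 0 ≤ L2 f := Real.sqrt_nonneg _

-- Cauchy–Schwarz for complex sums
lemma norm_sum_sq_le {α : Type*} (s : Finset α) (z : α → ℂ) :
    ‖∑ a ∈ s, z a‖ ^ 2 ≤ (s.card : ℝ) * ∑ a ∈ s, ‖z a‖ ^ 2 := by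
  calc ‖∑ a ∈ s, z a‖ ^ 2 ≤ (∑ a ∈ s, ‖z a‖) ^ 2 := by
        exact pow_le_pow_left₀ (norm_nonneg _) (norm_sum_le _ _) 2
    _ = (∑ a ∈ s, 1 * ‖z a‖) ^ 2 := by simp
    _ ≤ (∑ _a ∈ s, (1:ℝ) ^ 2) * ∑ a ∈ s, ‖z a‖ ^ 2 :=
        Finset.sum_mul_sq_le_sq_mul_sq s _ _
    _ = (s.card : ℝ) * ∑ a ∈ s, ‖z a‖ ^ 2 := by simp

-- Cauchy–Schwarz for the inner product
lemma norm_inprod_le (u w : Vec p n → ℂ) : ‖inprod u w‖ ≤ L2 u * L2 w := by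
  have hN : (0:ℝ) < (Fintype.card (Vec p n) : ℝ) := by positivity
  rw [inprod, avgC, norm_div, Complex.norm_natCast]
  rw [div_le_iff₀ hN] at *
  have h1 : ‖∑ x, u x * star (w x)‖ ≤ ∑ x, ‖u x‖ * ‖w x‖ := by
    refine (norm_sum_le _ _).trans (le_of_eq ?_)
    refine Finset.sum_congr rfl fun x _ => ?_
    rw [norm_mul, norm_star]
  have h2 : (∑ x, ‖u x‖ * ‖w x‖) ≤
      Real.sqrt (∑ x, ‖u x‖ ^ 2) * Real.sqrt (∑ x, ‖w x‖ ^ 2) := by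
    have := Finset.sum_mul_sq_le_sq_mul_sq Finset.univ (fun x => ‖u x‖) (fun x => ‖w x‖)
    have h3 : (∑ x, ‖u x‖ * ‖w x‖) = Real.sqrt ((∑ x, ‖u x‖ * ‖w x‖) ^ 2) := by
      rw [Real.sqrt_sq (by positivity)]
    rw [h3, ← Real.sqrt_mul (by positivity)]
    exact Real.sqrt_le_sqrt this
  refine (h1.trans h2).trans (le_of_eq ?_)
  rw [L2, L2, avgR, avgR, Real.sqrt_div (by positivity) _, Real.sqrt_div (by positivity) _]
  have hs : Real.sqrt ((Fintype.card (Vec p n) : ℝ)) ≠ 0 := by positivity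
  field_simp
  rw [Real.sq_sqrt (by positivity)]

end Aux

section Aux2
variable {p n : ℕ} [NeZero p]

-- convolution identity: averaging projection doesn't change inner product with V-invariant f
lemma inprod_conv (V : Submodule (ZMod p) (Vec p n)) (g f : Vec p n → ℂ)
    (hconst : ∀ x : Vec p n, ∀ v ∈ V, f (x + v) = f x) :
    (∑ x, (∑ v ∈ subFinset V, g (x + v)) * star (f x))
      = ((subFinset V).card : ℂ) * ∑ x, g x * star (f x) := by
  have hfsub : ∀ (y : Vec p n), ∀ v ∈ V, f (y - v) = f y := by
    intro y v hv
    conv_rhs => rw [show y = (y - v) + v by ring]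
    rw [hconst _ v hv]
  calc (∑ x, (∑ v ∈ subFinset V, g (x + v)) * star (f x))
      = ∑ v ∈ subFinset V, ∑ x, g (x + v) * star (f x) := by
        rw [Finset.sum_comm]
        exact Finset.sum_congr rfl fun x _ => Finset.sum_mul _ _ _
    _ = ∑ v ∈ subFinset V, ∑ y, g y * star (f (y - v)) := by
        refine Finset.sum_congr rfl fun v _ => ?_
        rw [← sum_shift (fun y => g y * star (f (y - v))) v]
        refine Finset.sum_congr rfl fun x _ => ?_
        rw [show x + v - v = x by ring]
    _ = ∑ v ∈ subFinset V, ∑ y, g y * star (f y) := by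
        refine Finset.sum_congr rfl fun v hv => Finset.sum_congr rfl fun y _ => ?_
        rw [hfsub y v (mem_subFinset.mp hv)]
    _ = ((subFinset V).card : ℂ) * ∑ x, g x * star (f x) := by
        rw [Finset.sum_const, nsmul_eq_mul]

-- the key L2 bound on the convolution
lemma conv_sum_eq (V : Submodule (ZMod p) (Vec p n)) (g : Vec p n → ℂ) :
    (∑ x, ((∑ v ∈ subFinset V, g (x + v)) * star (∑ v ∈ subFinset V, g (x + v))))
      = ((subFinset V).card : ℂ) *
        ∑ a ∈ subFinset V, ∑ x, g x * star (g (x + a)) := by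
  have step1 : ∀ x : Vec p n,
      ((∑ v ∈ subFinset V, g (x + v)) * star (∑ v ∈ subFinset V, g (x + v)))
      = ∑ v ∈ subFinset V, ∑ w ∈ subFinset V, g (x + v) * star (g (x + w)) := by
    intro x
    rw [star_sum, Finset.sum_mul_sum]
  simp only [step1]
  rw [Finset.sum_comm]
  have step2 : ∀ v ∈ subFinset V,
      (∑ x, ∑ w ∈ subFinset V, g (x + v) * star (g (x + w)))
      = ∑ a ∈ subFinset V, ∑ x, g x * star (g (x + a)) := by
    intro v hv
    rw [Finset.sum_comm]
    -- reindex w ↦ w - v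
    refine Finset.sum_nbij' (fun w => w - v) (fun a => a + v) ?_ ?_ ?_ ?_ ?_
    · intro w hw
      exact mem_subFinset.mpr (V.sub_mem (mem_subFinset.mp hw) (mem_subFinset.mp hv))
    · intro a ha
      exact mem_subFinset.mpr (V.add_mem (mem_subFinset.mp ha) (mem_subFinset.mp hv))
    · intro w _; ring
    · intro a _; ring
    · intro w _
      rw [← sum_shift (fun x => g x * star (g (x + (w - v)))) v]
      refine Finset.sum_congr rfl fun x _ => ?_
      rw [show x + v + (w - v) = x + w by ring]
  rw [Finset.sum_congr rfl step2, Finset.sum_const, nsmul_eq_mul]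

end Aux2

section Main
variable {p n : ℕ} [Fact p.Prime]

lemma card_Vec : Fintype.card (Vec p n) = p ^ n := by
  simp [ZMod.card]

lemma card_subFinset (V : Submodule (ZMod p) (Vec p n)) :
    (subFinset V).card = p ^ (Module.finrank (ZMod p) V) := by
  classical
  have h1 : (subFinset V).card = Fintype.card V := by
    rw [subFinset]
    calc (Finset.univ.filter (fun v => v ∈ (V : Set (Vec p n)))).card
        = Fintype.card {v // v ∈ (V : Set (Vec p n))} := by
          convert (Fintype.card_subtype (fun v => v ∈ (V : Set (Vec p n)))).symm using 2
      _ = Fintype.card V := Fintype.card_congr (Equiv.subtypeEquivRight fun _ => Iff.rfl)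
  rw [h1, Module.card_eq_pow_finrank (K := ZMod p), ZMod.card]

lemma finrank_V_le (V : Submodule (ZMod p) (Vec p n)) :
    Module.finrank (ZMod p) V ≤ n := by
  have := Submodule.finrank_le V
  rwa [Module.finrank_fin_fun] at this

lemma N_div_M (V : Submodule (ZMod p) (Vec p n)) (r : ℕ)
    (hr : n - Module.finrank (ZMod p) V = r) :
    (Fintype.card (Vec p n) : ℝ) / ((subFinset V).card : ℝ) = (p : ℝ) ^ (r : ℕ) := by
  have hd := finrank_V_le V
  have hn : n = Module.finrank (ZMod p) V + r := by omega
  have hp : (0:ℝ) < (p:ℝ) := by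
    have := (Fact.out : p.Prime).pos; positivity
  have hpow : (p:ℝ) ^ n = (p:ℝ) ^ (Module.finrank (ZMod p) V) * (p:ℝ) ^ r := by
    rw [← pow_add, ← hn]
  rw [card_Vec, card_subFinset]
  push_cast
  rw [hpow, mul_comm, mul_div_assoc, div_self (by positivity), mul_one]

set_option maxHeartbeats 1000000 in
lemma inprod_le (V : Submodule (ZMod p) (Vec p n)) (r : ℕ)
    (hr : n - Module.finrank (ZMod p) V = r)
    (f g : Vec p n → ℂ) (hconst : ∀ x : Vec p n, ∀ v ∈ V, f (x + v) = f x) :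
    ‖inprod g f‖ ≤ (p : ℝ) ^ ((r : ℝ) / 4) * U2 g * L2 f := by
  classical
  have hppos : (0:ℝ) < (p:ℝ) := by
    have := (Fact.out : p.Prime).pos; positivity
  have h0V : (0 : Vec p n) ∈ subFinset V := mem_subFinset.mpr V.zero_mem
  have hM0 : 0 < (subFinset V).card := Finset.card_pos.mpr ⟨0, h0V⟩
  have hMR : (0:ℝ) < ((subFinset V).card : ℝ) := by exact_mod_cast hM0
  have hNR : (0:ℝ) < (Fintype.card (Vec p n) : ℝ) := by positivity
  set M : ℝ := ((subFinset V).card : ℝ) with hMdef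
  set N : ℝ := (Fintype.card (Vec p n) : ℝ) with hNdef
  set h : Vec p n → ℂ := fun x => (∑ v ∈ subFinset V, g (x + v)) / ((subFinset V).card : ℂ)
    with hhdef
  have hMC : ((subFinset V).card : ℂ) ≠ 0 := by exact_mod_cast hM0.ne'
  -- step 1 : inprod g f = inprod h f
  have step1 : inprod g f = inprod h f := by
    rw [inprod, inprod, avgC, avgC]
    congr 1
    have : (∑ x, h x * star (f x))
        = (∑ x, (∑ v ∈ subFinset V, g (x + v)) * star (f x)) / ((subFinset V).card : ℂ) := by
      rw [Finset.sum_div]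
      exact Finset.sum_congr rfl fun x _ => by rw [hhdef]; ring
    rw [this, inprod_conv V g f hconst, mul_div_cancel_left₀ _ hMC]
  -- step 3 : L2 h ≤ p^(r/4) * U2 g
  have hSx : ((∑ x, ‖∑ v ∈ subFinset V, g (x + v)‖^2 : ℝ) : ℂ)
      = ((subFinset V).card : ℂ) * ∑ a ∈ subFinset V, ∑ x, g x * star (g (x + a)) := by
    rw [← conv_sum_eq V g, Complex.ofReal_sum]
    refine Finset.sum_congr rfl fun x _ => ?_
    simp only [RCLike.star_def]
    rw [RCLike.mul_conj (K := ℂ)]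
    norm_cast
  have hSx' : (∑ x, ‖∑ v ∈ subFinset V, g (x + v)‖^2)
      = M * ‖∑ a ∈ subFinset V, ∑ x, g x * star (g (x + a))‖ := by
    have h2 := congrArg norm hSx
    rwa [Complex.norm_real,
      Real.norm_of_nonneg (Finset.sum_nonneg fun _ _ => by positivity), norm_mul,
      Complex.norm_natCast] at h2
  have hCS : ‖∑ a ∈ subFinset V, ∑ x, g x * star (g (x + a))‖^2
      ≤ M * ∑ a, ‖∑ x, g x * star (g (x + a))‖^2 := by
    refine (norm_sum_sq_le _ _).trans ?_
    refine mul_le_mul_of_nonneg_left ?_ (by positivity)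
    exact Finset.sum_le_sum_of_subset_of_nonneg (Finset.subset_univ _)
      (fun _ _ _ => by positivity)
  have hsum_univ : (∑ a, ‖∑ x, g x * star (g (x + a))‖^2) = N^3 * U2 g ^ 4 := by
    rw [U2_pow_four, ← hNdef]
    field_simp
  have hhx : ∀ x, ‖h x‖^2 = ‖∑ v ∈ subFinset V, g (x + v)‖^2 / M^2 := by
    intro x
    rw [hhdef]
    rw [norm_div, Complex.norm_natCast, div_pow, hMdef]
  have hL2h2 : L2 h ^ 2 = (∑ x, ‖∑ v ∈ subFinset V, g (x + v)‖^2) / (M^2 * N) := by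
    rw [L2_sq, ← hNdef]
    simp only [hhx]
    rw [← Finset.sum_div]
    field_simp
  have hL2h4 : L2 h ^ 4 ≤ (p:ℝ)^(r:ℕ) * U2 g ^ 4 := by
    have e1 : L2 h ^ 4 = (L2 h ^ 2) ^ 2 := by ring
    rw [e1, hL2h2, div_pow, hSx', mul_pow]
    have e2 : M ^ 2 * ‖∑ a ∈ subFinset V, ∑ x, g x * star (g (x + a))‖ ^ 2
        ≤ M ^ 2 * (M * (N^3 * U2 g ^ 4)) := by
      refine mul_le_mul_of_nonneg_left ?_ (by positivity)
      rw [← hsum_univ]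
      exact hCS
    calc M ^ 2 * ‖∑ a ∈ subFinset V, ∑ x, g x * star (g (x + a))‖ ^ 2 / (M ^ 2 * N) ^ 2
        ≤ M ^ 2 * (M * (N ^ 3 * U2 g ^ 4)) / (M ^ 2 * N) ^ 2 :=
          (div_le_div_iff_of_pos_right (by positivity)).mpr e2
      _ = (N / M) * U2 g ^ 4 := by field_simp
      _ = (p:ℝ) ^ (r:ℕ) * U2 g ^ 4 := by
          rw [show N / M = (p:ℝ) ^ (r:ℕ) from N_div_M V r hr]
  have hL2h : L2 h ≤ (p:ℝ) ^ ((r:ℝ)/4) * U2 g := by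
    have hrhs : ((p:ℝ) ^ ((r:ℝ)/4) * U2 g) ^ 4 = (p:ℝ) ^ (r:ℕ) * U2 g ^ 4 := by
      rw [mul_pow, ← Real.rpow_natCast ((p:ℝ) ^ ((r:ℝ)/4)) 4,
        ← Real.rpow_mul hppos.le, show (r:ℝ)/4 * ((4:ℕ):ℝ) = (r:ℕ) by push_cast; ring,
        Real.rpow_natCast]
    refine le_of_pow_le_pow_left₀ (n := 4) (by norm_num)
      (mul_nonneg (by positivity) (U2_nonneg g)) ?_
    rw [hrhs]
    exact hL2h4
  calc ‖inprod g f‖ = ‖inprod h f‖ := by rw [step1]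
    _ ≤ L2 h * L2 f := norm_inprod_le h f
    _ ≤ ((p:ℝ) ^ ((r:ℝ)/4) * U2 g) * L2 f :=
        mul_le_mul_of_nonneg_right hL2h (L2_nonneg f)

end Main

/-- Lemma 5.5. If `f` is constant on cosets of a subspace `V` of
codimension `r`, then `‖f‖_{U²} ≥ p^{-r/4}‖f‖₂` and `‖f‖_{U²}^* ≤ p^{r/4}‖f‖₂`. -/
theorem stmt15 (p : ℕ) [Fact p.Prime] (n : ℕ)
    (V : Submodule (ZMod p) (Vec p n)) (r : ℕ)
    (hr : n - Module.finrank (ZMod p) V = r)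
    (f : Vec p n → ℂ) (hconst : ∀ x : Vec p n, ∀ v ∈ V, f (x + v) = f x) :
    (p : ℝ) ^ (-(r : ℝ) / 4) * L2 f ≤ U2 f ∧
    U2dual f ≤ (p : ℝ) ^ ((r : ℝ) / 4) * L2 f := by
  have hppos : (0:ℝ) < (p:ℝ) := by
    have := (Fact.out : p.Prime).pos; positivity
  have h0V : (0 : Vec p n) ∈ subFinset V := mem_subFinset.mpr V.zero_mem
  have hM0 : 0 < (subFinset V).card := Finset.card_pos.mpr ⟨0, h0V⟩
  have hMR : (0:ℝ) < ((subFinset V).card : ℝ) := by exact_mod_cast hM0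
  have hNR : (0:ℝ) < (Fintype.card (Vec p n) : ℝ) := by positivity
  constructor
  · -- lower bound
    refine le_of_pow_le_pow_left₀ (n := 4) (by norm_num) (U2_nonneg f) ?_
    have hT0 : (0:ℝ) ≤ ∑ x, ‖f x‖^2 := by positivity
    have hTa : ∀ a ∈ subFinset V,
        (∑ x, f x * star (f (x + a))) = ((∑ x, ‖f x‖^2 : ℝ) : ℂ) := by
      intro a ha
      rw [Complex.ofReal_sum]
      refine Finset.sum_congr rfl fun x _ => ?_
      rw [hconst x a (mem_subFinset.mp ha)]
      simp only [RCLike.star_def]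
      rw [RCLike.mul_conj (K := ℂ)]
      norm_cast
    have hsub : ∑ a ∈ subFinset V, ‖∑ x, f x * star (f (x + a))‖^2
        = ((subFinset V).card : ℝ) * (∑ x, ‖f x‖^2)^2 := by
      rw [Finset.sum_congr rfl (fun a ha => by
        rw [hTa a ha, Complex.norm_real, Real.norm_of_nonneg hT0])]
      rw [Finset.sum_const, nsmul_eq_mul]
    have hge : ((subFinset V).card : ℝ) * (∑ x, ‖f x‖^2)^2
        ≤ ∑ a, ‖∑ x, f x * star (f (x + a))‖^2 := by
      rw [← hsub]
      exact Finset.sum_le_sum_of_subset_of_nonneg (Finset.subset_univ _)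
        (fun _ _ _ => by positivity)
    have hc4 : ((p:ℝ) ^ (-(r:ℝ)/4)) ^ 4
        = ((subFinset V).card : ℝ) / (Fintype.card (Vec p n) : ℝ) := by
      rw [← Real.rpow_natCast ((p:ℝ) ^ (-(r:ℝ)/4)) 4, ← Real.rpow_mul hppos.le,
        show -(r:ℝ)/4 * ((4:ℕ):ℝ) = -(r:ℕ) by push_cast; ring, Real.rpow_neg hppos.le,
        Real.rpow_natCast, ← N_div_M V r hr, inv_div]
    rw [mul_pow, hc4, U2_pow_four, show L2 f ^ 4 = (L2 f ^ 2)^2 by ring, L2_sq]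
    rw [show ((subFinset V).card : ℝ) / (Fintype.card (Vec p n) : ℝ) *
        ((∑ x, ‖f x‖^2) / (Fintype.card (Vec p n) : ℝ))^2
        = (((subFinset V).card : ℝ) * (∑ x, ‖f x‖^2)^2) /
          (Fintype.card (Vec p n) : ℝ)^3 by
        rw [div_pow, div_mul_div_comm]
        congr 1
        ring]
    exact (div_le_div_iff_of_pos_right (by positivity)).mpr hge
  · -- dual bound
    refine Real.sSup_le ?_ (mul_nonneg (by positivity) (L2_nonneg f))
    rintro x ⟨g, hg, rfl⟩
    refine (inprod_le V r hr f g hconst).trans ?_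
    have h1 : (p:ℝ)^((r:ℝ)/4) * U2 g ≤ (p:ℝ)^((r:ℝ)/4) * 1 :=
      mul_le_mul_of_nonneg_left hg (by positivity)
    calc (p:ℝ)^((r:ℝ)/4) * U2 g * L2 f ≤ ((p:ℝ)^((r:ℝ)/4) * 1) * L2 f :=
          mul_le_mul_of_nonneg_right h1 (L2_nonneg f)
      _ = (p:ℝ)^((r:ℝ)/4) * L2 f := by ring
end

section
/- Let p be a prime, and suppose that L_i(x) = Σ_{u=1}^d c_{iu}x_u, i = 1,2,…,m, is a square-independent system of linear forms over 𝔽_p. Let V be a linear subspace of 𝔽_p^n and let β_1,…,β_m be (not necessarily distinct) bilinear forms on V, each of rank at least r. Then at least one of the bilinear forms β_{uv} = Σ_{i=1}^m c_{iu}c_{iv}β_i (for (u,v) ∈ {1,…,d}²) has rank at least r/m. -/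
open scoped BigOperators

section auxStmt18

variable {p n : ℕ}

/-- The radical as an explicit submodule. -/
def radSub (W : Submodule (ZMod p) (Vec p n))
    (β : Vec p n →ₗ[ZMod p] Vec p n →ₗ[ZMod p] ZMod p) : Submodule (ZMod p) (Vec p n) where
  carrier := {y | y ∈ W ∧ ∀ x ∈ W, β x y = 0}
  add_mem' := by
    rintro a b ⟨ha, ha'⟩ ⟨hb, hb'⟩
    exact ⟨W.add_mem ha hb, fun x hx => by simp [ha' x hx, hb' x hx]⟩
  zero_mem' := ⟨W.zero_mem, fun x hx => by simp⟩
  smul_mem' := by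
    rintro a y ⟨hy, hy'⟩
    exact ⟨W.smul_mem a hy, fun x hx => by simp [hy' x hx]⟩

lemma bRadical_eq (W : Submodule (ZMod p) (Vec p n))
    (β : Vec p n →ₗ[ZMod p] Vec p n →ₗ[ZMod p] ZMod p) :
    bRadical W β = radSub W β :=
  Submodule.span_eq (radSub W β)

lemma mem_bRadical_iff {W : Submodule (ZMod p) (Vec p n)}
    {β : Vec p n →ₗ[ZMod p] Vec p n →ₗ[ZMod p] ZMod p} {y : Vec p n} :
    y ∈ bRadical W β ↔ y ∈ W ∧ ∀ x ∈ W, β x y = 0 := by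
  rw [bRadical_eq]; exact Iff.rfl

lemma bRadical_le (W : Submodule (ZMod p) (Vec p n))
    (β : Vec p n →ₗ[ZMod p] Vec p n →ₗ[ZMod p] ZMod p) :
    bRadical W β ≤ W := fun _ hy => (mem_bRadical_iff.mp hy).1

lemma inf_le_bRadical_add (W : Submodule (ZMod p) (Vec p n))
    (β γ : Vec p n →ₗ[ZMod p] Vec p n →ₗ[ZMod p] ZMod p) :
    bRadical W β ⊓ bRadical W γ ≤ bRadical W (β + γ) := by
  rintro y ⟨hy1, hy2⟩
  obtain ⟨hyW, hy1'⟩ := mem_bRadical_iff.mp hy1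
  obtain ⟨-, hy2'⟩ := mem_bRadical_iff.mp hy2
  exact mem_bRadical_iff.mpr ⟨hyW, fun x hx => by simp [hy1' x hx, hy2' x hx]⟩

lemma bRadical_le_smul (W : Submodule (ZMod p) (Vec p n))
    (a : ZMod p) (β : Vec p n →ₗ[ZMod p] Vec p n →ₗ[ZMod p] ZMod p) :
    bRadical W β ≤ bRadical W (a • β) := by
  intro y hy
  obtain ⟨hyW, hy'⟩ := mem_bRadical_iff.mp hy
  exact mem_bRadical_iff.mpr ⟨hyW, fun x hx => by simp [hy' x hx]⟩

variable [Fact p.Prime]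

lemma codim_inf_le (W A B : Submodule (ZMod p) (Vec p n)) (hA : A ≤ W) (hB : B ≤ W) :
    Module.finrank (ZMod p) W - Module.finrank (ZMod p) (A ⊓ B : Submodule (ZMod p) (Vec p n)) ≤
      (Module.finrank (ZMod p) W - Module.finrank (ZMod p) A) +
      (Module.finrank (ZMod p) W - Module.finrank (ZMod p) B) := by
  have h1 := Submodule.finrank_sup_add_finrank_inf_eq A B
  have h2 : Module.finrank (ZMod p) (A ⊔ B : Submodule (ZMod p) (Vec p n)) ≤
      Module.finrank (ZMod p) W := Submodule.finrank_mono (sup_le hA hB)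
  have h3 : Module.finrank (ZMod p) A ≤ Module.finrank (ZMod p) W := Submodule.finrank_mono hA
  have h4 : Module.finrank (ZMod p) B ≤ Module.finrank (ZMod p) W := Submodule.finrank_mono hB
  have h5 : Module.finrank (ZMod p) (A ⊓ B : Submodule (ZMod p) (Vec p n)) ≤
      Module.finrank (ZMod p) A := Submodule.finrank_mono inf_le_left
  omega

lemma bRankOn_add_le (W : Submodule (ZMod p) (Vec p n))
    (β γ : Vec p n →ₗ[ZMod p] Vec p n →ₗ[ZMod p] ZMod p) :
    bRankOn W (β + γ) ≤ bRankOn W β + bRankOn W γ := by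
  have h1 : Module.finrank (ZMod p)
      (bRadical W β ⊓ bRadical W γ : Submodule (ZMod p) (Vec p n)) ≤
      Module.finrank (ZMod p) (bRadical W (β + γ)) :=
    Submodule.finrank_mono (inf_le_bRadical_add W β γ)
  have h2 := codim_inf_le W (bRadical W β) (bRadical W γ) (bRadical_le W β) (bRadical_le W γ)
  unfold bRankOn
  omega

lemma bRankOn_smul_le (W : Submodule (ZMod p) (Vec p n))
    (a : ZMod p) (β : Vec p n →ₗ[ZMod p] Vec p n →ₗ[ZMod p] ZMod p) :
    bRankOn W (a • β) ≤ bRankOn W β := by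
  have := Submodule.finrank_mono (bRadical_le_smul W a β)
  unfold bRankOn
  omega

lemma bRankOn_zero (W : Submodule (ZMod p) (Vec p n)) :
    bRankOn W (0 : Vec p n →ₗ[ZMod p] Vec p n →ₗ[ZMod p] ZMod p) = 0 := by
  have hle : W ≤ bRadical W 0 := fun y hy =>
    mem_bRadical_iff.mpr ⟨hy, fun x _ => rfl⟩
  have := Submodule.finrank_mono hle
  unfold bRankOn
  omega

lemma bRankOn_sum_le {ι : Type*} (W : Submodule (ZMod p) (Vec p n)) (t : Finset ι)
    (g : ι → (Vec p n →ₗ[ZMod p] Vec p n →ₗ[ZMod p] ZMod p)) :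
    bRankOn W (∑ i ∈ t, g i) ≤ ∑ i ∈ t, bRankOn W (g i) := by
  classical
  induction t using Finset.cons_induction with
  | empty => simp [bRankOn_zero]
  | cons a s ha ih =>
    rw [Finset.sum_cons, Finset.sum_cons]
    exact (bRankOn_add_le W _ _).trans (by omega)

end auxStmt18

/-- Corollary 6.4. Given a square-independent system of linear forms
with coefficients `c` and bilinear forms `β₁,…,β_m` on `V` each of rank at least `r`, at
least one of the combinations `β_{uv} = ∑ᵢ c_{iu}c_{iv}βᵢ` has rank at least `r/m`. -/
theorem stmt18 (p : ℕ) [Fact p.Prime] (n d m : ℕ) (hm : 0 < m)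
    (c : Fin m → Fin d → ZMod p)
    (hsq : LinearIndependent (ZMod p)
      (fun i : Fin m => Matrix.of (fun u v : Fin d => c i u * c i v)))
    (V : Submodule (ZMod p) (Vec p n))
    (β : Fin m → (Vec p n →ₗ[ZMod p] Vec p n →ₗ[ZMod p] ZMod p))
    (r : ℕ) (hβ : ∀ i, r ≤ bRankOn V (β i)) :
    ∃ u v : Fin d,
      (r : ℝ) / m ≤ (bRankOn V (∑ i, (c i u * c i v) • β i) : ℝ) := by
  classical
  set i0 : Fin m := ⟨0, hm⟩
  -- d is positive
  have hd : 0 < d := by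
    rcases Nat.eq_zero_or_pos d with hd0 | hd0
    · exfalso
      have hne := hsq.ne_zero i0
      apply hne
      subst hd0
      exact Subsingleton.elim _ _
    · exact hd0
  -- trivial case r = 0
  rcases Nat.eq_zero_or_pos r with hr0 | hr
  · refine ⟨⟨0, hd⟩, ⟨0, hd⟩, ?_⟩
    rw [hr0]
    simp [Nat.cast_nonneg]
  by_contra hcon
  push_neg at hcon
  -- notation
  set vv : Fin d × Fin d → (Fin m → ZMod p) := fun uv i => c i uv.1 * c i uv.2 with hvv
  set ψ : (Fin m → ZMod p) →ₗ[ZMod p] (Vec p n →ₗ[ZMod p] Vec p n →ₗ[ZMod p] ZMod p) :=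
    ∑ i, (LinearMap.proj i : (Fin m → ZMod p) →ₗ[ZMod p] ZMod p).smulRight (β i) with hψ
  have hψ_apply : ∀ t : Fin m → ZMod p, ψ t = ∑ i, t i • β i := by
    intro t
    simp [hψ, LinearMap.sum_apply]
  set B : Fin d × Fin d → (Vec p n →ₗ[ZMod p] Vec p n →ₗ[ZMod p] ZMod p) := fun uv => ψ (vv uv) with hB
  have hB_apply : ∀ uv : Fin d × Fin d, B uv = ∑ i, (c i uv.1 * c i uv.2) • β i := by
    intro uv; exact hψ_apply (vv uv)
  -- the coefficient vectors span everything
  have hspan : Submodule.span (ZMod p) (Set.range vv) = ⊤ := by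
    by_contra h
    obtain ⟨f, hf0, hfmap⟩ := Submodule.exists_dual_map_eq_bot_of_lt_top
      (p := Submodule.span (ZMod p) (Set.range vv)) (lt_top_iff_ne_top.mpr h) inferInstance
    set t : Fin m → ZMod p := fun i => f (Pi.single i 1) with ht
    have hft : ∀ x : Fin m → ZMod p, f x = ∑ i, x i * t i := by
      intro x
      rw [LinearMap.pi_apply_eq_sum_univ]
      have hsingle : ∀ i : Fin m, (fun j => if i = j then (1 : ZMod p) else 0) = Pi.single i 1 := by
        intro i; ext j; simp [Pi.single_apply, eq_comm]
      simp only [ht, smul_eq_mul, hsingle]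
    have hfvv : ∀ uv : Fin d × Fin d, f (vv uv) = 0 := by
      intro uv
      have hmem : vv uv ∈ Submodule.span (ZMod p) (Set.range vv) :=
        Submodule.subset_span ⟨uv, rfl⟩
      have : f (vv uv) ∈ (Submodule.span (ZMod p) (Set.range vv)).map f :=
        Submodule.mem_map_of_mem hmem
      rw [hfmap] at this
      exact Submodule.mem_bot _ |>.mp this
    have hzero : (∑ i, t i • (Matrix.of (fun u v : Fin d => c i u * c i v))) = 0 := by
      ext u v
      have h1 := hfvv (u, v)
      rw [hft] at h1
      simpa [Matrix.sum_apply, mul_comm] using h1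
    have ht0 : ∀ i, t i = 0 := Fintype.linearIndependent_iff.mp hsq t hzero
    apply hf0
    apply LinearMap.ext
    intro x
    rw [hft x]
    simp [ht0]
  -- β i0 lies in the span of the B's
  have hrangeB : Set.range B = ψ '' Set.range vv := by
    rw [hB]
    exact Set.range_comp ψ vv
  have hmem0 : β i0 ∈ Submodule.span (ZMod p) (Set.range B) := by
    rw [hrangeB, Submodule.span_image, hspan, Submodule.map_top]
    refine ⟨Pi.single i0 1, ?_⟩
    rw [hψ_apply]
    simp [Pi.single_apply, ite_smul]
  -- the span of the B's has dimension at most m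
  have hspanB_le : Submodule.span (ZMod p) (Set.range B) ≤
      Submodule.span (ZMod p) (Set.range β) := by
    rw [Submodule.span_le]
    rintro _ ⟨uv, rfl⟩
    rw [hB_apply]
    exact Submodule.sum_mem _ fun i _ =>
      Submodule.smul_mem _ _ (Submodule.subset_span (Set.mem_range_self i))
  have hdimB : Module.finrank (ZMod p) (Submodule.span (ZMod p) (Set.range B)) ≤ m := by
    refine le_trans (Submodule.finrank_mono hspanB_le) ?_
    simpa [Set.finrank] using finrank_range_le_card (R := ZMod p) β
  -- choose an independent subfamily
  obtain ⟨b, hb_sub, hb_span, hb_li⟩ := exists_linearIndependent (ZMod p) (Set.range B)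
  have hbfin : b.Finite := (Set.finite_range B).subset hb_sub
  haveI := hbfin.fintype
  have hcard : b.toFinset.card ≤ m := by
    have h1 : b.toFinset.card = Module.finrank (ZMod p) (Submodule.span (ZMod p) b) :=
      (finrank_span_set_eq_card hb_li).symm
    rw [h1, hb_span]
    exact hdimB
  have hmem0' : β i0 ∈ Submodule.span (ZMod p) (↑b.toFinset : Set (Vec p n →ₗ[ZMod p] Vec p n →ₗ[ZMod p] ZMod p)) := by
    rw [Set.coe_toFinset, hb_span]
    exact hmem0
  obtain ⟨f, -, hf⟩ := Submodule.mem_span_finset.mp hmem0'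
  -- rank estimates
  have hrank1 : r ≤ bRankOn V (β i0) := hβ i0
  have hrank2 : bRankOn V (β i0) ≤ ∑ y ∈ b.toFinset, bRankOn V y := by
    calc bRankOn V (β i0) = bRankOn V (∑ y ∈ b.toFinset, f y • y) := by rw [hf]
    _ ≤ ∑ y ∈ b.toFinset, bRankOn V (f y • y) := bRankOn_sum_le V _ _
    _ ≤ ∑ y ∈ b.toFinset, bRankOn V y :=
        Finset.sum_le_sum fun y _ => bRankOn_smul_le V _ _
  have hsmall : ∀ y ∈ b.toFinset, (bRankOn V y : ℝ) < (r : ℝ) / m := by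
    intro y hy
    have hyb : y ∈ b := Set.mem_toFinset.mp hy
    obtain ⟨uv, rfl⟩ := hb_sub hyb
    have := hcon uv.1 uv.2
    rw [← hB_apply] at this
    exact this
  -- put everything together over ℝ
  have hne : b.toFinset.Nonempty := by
    rcases Finset.eq_empty_or_nonempty b.toFinset with he | hne
    · exfalso
      rw [he, Finset.sum_empty] at hrank2
      omega
    · exact hne
  have hreal : (r : ℝ) ≤ ∑ y ∈ b.toFinset, (bRankOn V y : ℝ) := by
    have : (r : ℝ) ≤ ((∑ y ∈ b.toFinset, bRankOn V y : ℕ) : ℝ) := by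
      exact_mod_cast le_trans hrank1 hrank2
    simpa [Nat.cast_sum] using this
  have hlt : ∑ y ∈ b.toFinset, (bRankOn V y : ℝ) <
      ∑ _y ∈ b.toFinset, (r : ℝ) / m :=
    Finset.sum_lt_sum_of_nonempty hne hsmall
  rw [Finset.sum_const, nsmul_eq_mul] at hlt
  have hfinal : (b.toFinset.card : ℝ) * ((r : ℝ) / m) ≤ (r : ℝ) := by
    have hm' : (0 : ℝ) < m := by exact_mod_cast hm
    have h1 : (b.toFinset.card : ℝ) * ((r : ℝ) / m) ≤ (m : ℝ) * ((r : ℝ) / m) := by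
      apply mul_le_mul_of_nonneg_right
      · exact_mod_cast hcard
      · positivity
    rw [mul_div_cancel₀] at h1
    · exact h1
    · exact ne_of_gt hm'
  linarith
end
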